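/- For every natural number r ≥ 0, the Fibonacci product polynomial Q_r divides Q_{2r+1} in ℤ[x], and P_r divides Q_{2r} in ℤ[x]. -/
import Mathlib


open Polynomial

/-- Fibonacci product polynomials `P`. -/
noncomputable def fibP : ℕ → Polynomial ℤ
  | 0 => 1
  | 1 => X - 2
  | n + 2 => (X - 3) * fibP (n + 1) - fibP n

/-- Fibonacci product polynomials `Q`. -/
noncomputable def fibQ : ℕ → Polynomial ℤ
  | 0 => 1
  | 1 => X - 3
  | n + 2 => (X - 3) * fibQ (n + 1) - fibQ n

lemma fibQ_add : ∀ n m : ℕ,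
    fibQ (m + n + 2) = fibQ (m + 1) * fibQ (n + 1) - fibQ m * fibQ n := by
  intro n
  induction n using Nat.twoStepInduction with
  | zero =>
    intro m
    show fibQ (m + 2) = _
    rw [fibQ]
    simp [fibQ]
    ring
  | one =>
    intro m
    show fibQ (m + 3) = _
    have h2 : m + 3 = (m + 1) + 2 := by ring
    rw [h2, fibQ, fibQ]
    simp [fibQ]
    ring
  | more k ih1 ih2 =>
    intro m
    have h : m + (k + 2) + 2 = (m + k + 2) + 2 := by ring
    rw [h, fibQ]
    have h1 : m + k + 2 + 1 = m + (k + 1) + 2 := by ring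
    rw [h1, ih2 m, ih1 m,
      show fibQ (k + 3) = (X - 3) * fibQ (k + 2) - fibQ (k + 1) from rfl,
      show fibQ (k + 2) = (X - 3) * fibQ (k + 1) - fibQ k from rfl]
    ring

lemma fibP_eq : ∀ n : ℕ, fibP (n + 1) = fibQ (n + 1) + fibQ n := by
  intro n
  induction n using Nat.twoStepInduction with
  | zero => simp [fibP, fibQ]; ring
  | one =>
    show fibP 2 = fibQ 2 + fibQ 1
    rw [show (2:ℕ) = 0 + 2 from rfl, fibP, fibQ]
    simp [fibP, fibQ]
    ring
  | more k ih1 ih2 =>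
    show fibP (k + 3) = fibQ (k + 3) + fibQ (k + 2)
    rw [show fibP (k + 3) = (X - 3) * fibP (k + 2) - fibP (k + 1) from rfl,
      show fibQ (k + 3) = (X - 3) * fibQ (k + 2) - fibQ (k + 1) from rfl,
      show fibP (k + 2) = fibQ (k + 2) + fibQ (k + 1) from ih2,
      ih1,
      show fibQ (k + 2) = (X - 3) * fibQ (k + 1) - fibQ k from rfl]
    ring

theorem stmt10 (r : ℕ) :
    fibQ r ∣ fibQ (2 * r + 1) ∧ fibP r ∣ fibQ (2 * r) := by
  cases r with
  | zero => simp [fibQ, fibP]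
  | succ k =>
    constructor
    · have h : 2 * (k + 1) + 1 = (k + 1) + k + 2 := by ring
      rw [h, fibQ_add k (k + 1)]
      exact ⟨fibQ (k + 2) - fibQ k, by ring⟩
    · have h : 2 * (k + 1) = k + k + 2 := by ring
      rw [h, fibQ_add k k, fibP_eq k]
      exact ⟨fibQ (k + 1) - fibQ k, by ring⟩
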